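/- Let J̃, J̃' ⊆ ℕ² be staircases (upward-closed, finite complements of sizes l and l'). There is a bijection between ℕ² \ J̃' and the set A_p of pairs (U, α) with α ∈ ℤ × ℕ (i.e., α_z ≥ 0) and U a bounded connected component of (J̃ + α) \ J̃', where connectivity is with respect to unit horizontal/vertical adjacency in ℤ². -/

import Mathlib

/-- The lift of a subset of `ℕ²` to `ℤ²`. -/
def liftN (J : Set (ℕ × ℕ)) : Set (ℤ × ℤ) :=
  {p | 0 ≤ p.1 ∧ 0 ≤ p.2 ∧ (p.1.toNat, p.2.toNat) ∈ J}

/-- One adjacency step inside a set `T ⊆ ℤ²` (unit horizontal/vertical moves). -/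
def Step (T : Set (ℤ × ℤ)) (a b : ℤ × ℤ) : Prop :=
  a ∈ T ∧ b ∈ T ∧ (a.1 - b.1).natAbs + (a.2 - b.2).natAbs = 1

/-- `U` is a connected component of `T ⊆ ℤ²` under unit edge-adjacency. -/
def IsComponent (T U : Set (ℤ × ℤ)) : Prop :=
  ∃ p ∈ T, U = {q | Relation.ReflTransGen (Step T) p q}

/-- The set `(J̃ + α) \ J̃'` inside `ℤ²`. -/
def TransDiff (J J' : Set (ℕ × ℕ)) (α : ℤ × ℤ) : Set (ℤ × ℤ) :=
  {p | (p.1 - α.1, p.2 - α.2) ∈ liftN J ∧ p ∉ liftN J'}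

namespace BijAux

/-! ### Generic reachability lemmas -/

lemma step_symm (T : Set (ℤ × ℤ)) : Symmetric (Step T) := by
  rintro a b ⟨ha, hb, h⟩
  exact ⟨hb, ha, by omega⟩

lemma mem_T_of_reach {T : Set (ℤ × ℤ)} {p q : ℤ × ℤ} (hp : p ∈ T)
    (h : Relation.ReflTransGen (Step T) p q) : q ∈ T := by
  induction h with
  | refl => exact hp
  | tail _ h _ => exact h.2.1

lemma reach_eq {T : Set (ℤ × ℤ)} {p q : ℤ × ℤ}
    (h : Relation.ReflTransGen (Step T) p q) :
    {r | Relation.ReflTransGen (Step T) q r} = {r | Relation.ReflTransGen (Step T) p r} := by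
  ext r
  constructor
  · intro hr; exact h.trans hr
  · intro hr; exact ((@Relation.ReflTransGen.symmetric _ (Step T) ⟨step_symm T⟩).symm _ _ h).trans hr

/-- Vertical path upward inside `T`. -/
lemma vert_reach {T : Set (ℤ × ℤ)} {p : ℤ × ℤ} (n : ℕ)
    (h : ∀ w : ℤ, p.2 ≤ w → w ≤ p.2 + n → (p.1, w) ∈ T) :
    Relation.ReflTransGen (Step T) p (p.1, p.2 + n) := by
  induction n with
  | zero =>
      have : (p.1, p.2 + ((0 : ℕ) : ℤ)) = p := by simp
      rw [this]
  | succ n ih =>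
      have h' : ∀ w : ℤ, p.2 ≤ w → w ≤ p.2 + n → (p.1, w) ∈ T := by
        intro w h1 h2; exact h w h1 (by push_cast; omega)
      refine (ih h').tail ⟨h _ (by omega) (by push_cast; omega),
        h _ (by omega) (by push_cast; omega), ?_⟩
      simp only
      omega

/-- If no edge connects column `m` to column `m - 1` in `T`, the reachable set of a
point in column `≥ m` stays in columns `≥ m`. -/
lemma reach_ge {T : Set (ℤ × ℤ)} {m : ℤ}
    (hcross : ∀ z : ℤ, ¬((m, z) ∈ T ∧ (m - 1, z) ∈ T))
    {p q : ℤ × ℤ} (hp : m ≤ p.1) (h : Relation.ReflTransGen (Step T) p q) : m ≤ q.1 := by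
  induction h with
  | refl => exact hp
  | @tail b c _ hbc ih =>
      obtain ⟨hbT, hcT, hd⟩ := hbc
      by_contra hlt
      push_neg at hlt
      have h1 : b.1 = m ∧ c.1 = m - 1 ∧ b.2 = c.2 := by omega
      refine hcross b.2 ⟨?_, ?_⟩
      · have : ((m : ℤ), b.2) = b := by rw [← h1.1]
        rw [this]; exact hbT
      · have : ((m - 1 : ℤ), b.2) = c := by rw [h1.2.2, ← h1.2.1]
        rw [this]; exact hcT

/-! ### Staircase lemmas -/

variable {J J' : Set (ℕ × ℕ)}

lemma liftN_up (hupJ : ∀ γ ∈ J, ∀ δ : ℕ × ℕ, γ.1 ≤ δ.1 → γ.2 ≤ δ.2 → δ ∈ J)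
    {x y x' y' : ℤ} (hp : (x, y) ∈ liftN J) (h1 : x ≤ x') (h2 : y ≤ y') :
    (x', y') ∈ liftN J := by
  obtain ⟨a1, a2, a3⟩ := hp
  exact ⟨by omega, by omega, hupJ _ a3 _ (by simp at *; omega) (by simp at *; omega)⟩

/-- Column top of the complement of `J'`. -/
noncomputable def z0 (J' : Set (ℕ × ℕ)) (y : ℕ) : ℕ := sSup {z | (y, z) ∉ J'}

lemma z0_spec (hfinJ' : J'ᶜ.Finite) {y b : ℕ} (hb : (y, b) ∉ J') :
    (y, z0 J' y) ∉ J' ∧ ∀ z, (y, z) ∉ J' → z ≤ z0 J' y := by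
  have hfin : {z | (y, z) ∉ J'}.Finite := by
    have he : {z | (y, z) ∉ J'} = (fun z => (y, z)) ⁻¹' J'ᶜ := rfl
    rw [he]
    refine Set.Finite.preimage ?_ hfinJ'
    intro a _ b _ h
    simpa using congrArg Prod.snd h
  exact ⟨Nat.sSup_mem ⟨b, hb⟩ hfin.bddAbove, fun z hz => le_csSup hfin.bddAbove hz⟩

/-- The predicate on the shift `a`. -/
def Q (J : Set (ℕ × ℕ)) (y c b : ℕ) (a : ℤ) : Prop :=
  ((y : ℤ) - a, (c : ℤ) - (b : ℤ)) ∈ liftN J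

lemma Q_anti (hupJ : ∀ γ ∈ J, ∀ δ : ℕ × ℕ, γ.1 ≤ δ.1 → γ.2 ≤ δ.2 → δ ∈ J)
    {y c b : ℕ} {a a' : ℤ} (h : a' ≤ a) (hQ : Q J y c b a) : Q J y c b a' :=
  liftN_up hupJ hQ (by omega) le_rfl

lemma exG (hupJ : ∀ γ ∈ J, ∀ δ : ℕ × ℕ, γ.1 ≤ δ.1 → γ.2 ≤ δ.2 → δ ∈ J)
    (hfinJ : Jᶜ.Finite) (y c b : ℕ) (hbc : b ≤ c) :
    ∃ a : ℤ, Q J y c b a ∧ ∀ a' : ℤ, Q J y c b a' → a' ≤ a := by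
  have hbdd : ∀ a : ℤ, Q J y c b a → a ≤ (y : ℤ) := by
    rintro a ⟨h1, -, -⟩
    simp only at h1
    omega
  have hne : ∃ a : ℤ, Q J y c b a := by
    obtain ⟨N, hNb⟩ := (hfinJ.image Prod.fst).bddAbove
    refine ⟨(y : ℤ) - (N + 1), ⟨by omega, by omega, ?_⟩⟩
    simp only
    by_contra hmem
    have h2 : ((y : ℤ) - ((y : ℤ) - (↑N + 1))).toNat = N + 1 := by omega
    rw [h2] at hmem
    have : N + 1 ≤ N := hNb ⟨(N + 1, _), hmem, rfl⟩
    omega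
  obtain ⟨a, ha, hub⟩ := Int.exists_greatest_of_bdd ⟨(y : ℤ), hbdd⟩ hne
  exact ⟨a, ha, hub⟩

noncomputable def astar (J : Set (ℕ × ℕ))
    (hupJ : ∀ γ ∈ J, ∀ δ : ℕ × ℕ, γ.1 ≤ δ.1 → γ.2 ≤ δ.2 → δ ∈ J)
    (hfinJ : Jᶜ.Finite) (y c b : ℕ) (hbc : b ≤ c) : ℤ :=
  (exG hupJ hfinJ y c b hbc).choose

lemma astar_spec (hupJ : ∀ γ ∈ J, ∀ δ : ℕ × ℕ, γ.1 ≤ δ.1 → γ.2 ≤ δ.2 → δ ∈ J)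
    (hfinJ : Jᶜ.Finite) (y c b : ℕ) (hbc : b ≤ c) :
    Q J y c b (astar J hupJ hfinJ y c b hbc) ∧
      ∀ a' : ℤ, Q J y c b a' → a' ≤ astar J hupJ hfinJ y c b hbc :=
  (exG hupJ hfinJ y c b hbc).choose_spec

lemma astar_eq (hupJ : ∀ γ ∈ J, ∀ δ : ℕ × ℕ, γ.1 ≤ δ.1 → γ.2 ≤ δ.2 → δ ∈ J)
    (hfinJ : Jᶜ.Finite) {y c b : ℕ} (hbc : b ≤ c) {a : ℤ}
    (hQ : Q J y c b a) (hnQ : ¬ Q J y c b (a + 1)) :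
    astar J hupJ hfinJ y c b hbc = a := by
  obtain ⟨h1, h2⟩ := astar_spec hupJ hfinJ y c b hbc
  have hle : a ≤ astar J hupJ hfinJ y c b hbc := h2 a hQ
  by_contra hne
  have : a + 1 ≤ astar J hupJ hfinJ y c b hbc := by omega
  exact hnQ (Q_anti hupJ this h1)

/-! ### Lemmas about `TransDiff` -/

lemma T_mem_props {α p} (hp : p ∈ TransDiff J J' α) :
    (p.1 - α.1, p.2 - α.2) ∈ liftN J ∧ p ∉ liftN J' := hp

/-- Membership propagates upward in the `J`-condition. -/
lemma mem_up (hupJ : ∀ γ ∈ J, ∀ δ : ℕ × ℕ, γ.1 ≤ δ.1 → γ.2 ≤ δ.2 → δ ∈ J)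
    {α p : ℤ × ℤ} (hp : p ∈ TransDiff J J' α) {w : ℤ} (hw : p.2 ≤ w)
    (hw' : (p.1, w) ∉ liftN J') : (p.1, w) ∈ TransDiff J J' α :=
  ⟨liftN_up hupJ hp.1 le_rfl (by omega), hw'⟩

/-- Climb vertically to the top of a column of the complement of `J'`. -/
lemma climb (hupJ : ∀ γ ∈ J, ∀ δ : ℕ × ℕ, γ.1 ≤ δ.1 → γ.2 ≤ δ.2 → δ ∈ J)
    (hupJ' : ∀ γ ∈ J', ∀ δ : ℕ × ℕ, γ.1 ≤ δ.1 → γ.2 ≤ δ.2 → δ ∈ J')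
    {α p : ℤ × ℤ} (hp : p ∈ TransDiff J J' α) {c : ℕ}
    (hc : p.2 ≤ (c : ℤ)) (htop : (p.1.toNat, c) ∉ J') :
    Relation.ReflTransGen (Step (TransDiff J J' α)) p (p.1, (c : ℤ)) := by
  have key : ∀ w : ℤ, p.2 ≤ w → w ≤ (c : ℤ) → (p.1, w) ∈ TransDiff J J' α := by
    intro w h1 h2
    refine mem_up hupJ hp h1 ?_
    rintro ⟨k1, k2, k3⟩
    simp only at k1 k2 k3
    exact htop (hupJ' _ k3 _ le_rfl (by omega))
  have hrw : p.2 + ((c : ℤ) - p.2).toNat = (c : ℤ) := by omega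
  have := vert_reach (T := TransDiff J J' α) (p := p) ((c : ℤ) - p.2).toNat
    (by intro w h1 h2; exact key w h1 (by omega))
  rwa [hrw] at this

/-- A point with negative first coordinate in `TransDiff` yields an infinite vertical ray. -/
lemma fst_nonneg_of_reach (hupJ : ∀ γ ∈ J, ∀ δ : ℕ × ℕ, γ.1 ≤ δ.1 → γ.2 ≤ δ.2 → δ ∈ J)
    {α p₀ : ℤ × ℤ} (hp₀ : p₀ ∈ TransDiff J J' α)
    (hfin : {q | Relation.ReflTransGen (Step (TransDiff J J' α)) p₀ q}.Finite)
    {q : ℤ × ℤ} (hq : Relation.ReflTransGen (Step (TransDiff J J' α)) p₀ q) : 0 ≤ q.1 := by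
  by_contra hneg
  push_neg at hneg
  have hqT : q ∈ TransDiff J J' α := mem_T_of_reach hp₀ hq
  have hray : ∀ w : ℤ, q.2 ≤ w → (q.1, w) ∈ TransDiff J J' α := by
    intro w hw
    refine mem_up hupJ hqT hw ?_
    rintro ⟨k1, -, -⟩
    simp only at k1
    omega
  have hmem : ∀ n : ℕ, (q.1, q.2 + (n : ℤ)) ∈
      {r | Relation.ReflTransGen (Step (TransDiff J J' α)) p₀ r} := by
    intro n
    exact hq.trans (vert_reach n (fun w h1 _ => hray w h1))
  have : Function.Injective (fun n : ℕ => (q.1, q.2 + (n : ℤ))) := by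
    intro m n h
    have := congrArg Prod.snd h
    simp only at this
    omega
  exact (Set.infinite_of_injective_forall_mem this hmem) hfin

lemma finite_of_props (hfinJ' : J'ᶜ.Finite) {U : Set (ℤ × ℤ)}
    (h : ∀ q ∈ U, 0 ≤ q.1 ∧ 0 ≤ q.2 ∧ (q.1.toNat, q.2.toNat) ∉ J') : U.Finite := by
  refine Set.Finite.of_finite_image (f := fun q : ℤ × ℤ => (q.1.toNat, q.2.toNat)) ?_ ?_
  · apply hfinJ'.subset
    rintro _ ⟨q, hq, rfl⟩
    exact (h q hq).2.2
  · intro q hq r hr he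
    have h1 := h q hq
    have h2 := h r hr
    simp only [Prod.mk.injEq] at he
    exact Prod.ext_iff.mpr ⟨by omega, by omega⟩

/-- No step from column `y` to column `y - 1` when `Q (a+1)` fails. -/
lemma no_cross (hupJ : ∀ γ ∈ J, ∀ δ : ℕ × ℕ, γ.1 ≤ δ.1 → γ.2 ≤ δ.2 → δ ∈ J)
    {y c b : ℕ} (htop : ∀ z : ℕ, (y, z) ∉ J' → z ≤ c) {a : ℤ}
    (hnQ : ¬ Q J y c b (a + 1)) (z : ℤ) :
    ¬(((y : ℤ), z) ∈ TransDiff J J' (a, (b : ℤ)) ∧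
      ((y : ℤ) - 1, z) ∈ TransDiff J J' (a, (b : ℤ))) := by
  rintro ⟨⟨hy1, hy2⟩, ⟨hl1, -⟩⟩
  have hzb : (b : ℤ) ≤ z := by
    have := hy1.2.1
    simp only at this
    omega
  have hz0 : 0 ≤ z := by omega
  have hzJ' : (y, z.toNat) ∉ J' := by
    intro hmem
    exact hy2 ⟨by simp, by simpa, by simpa⟩
  have hzc : z.toNat ≤ c := htop _ hzJ'
  apply hnQ
  have : ((y : ℤ) - 1 - a, z - (b : ℤ)) ∈ liftN J := hl1
  exact liftN_up hupJ this (by omega) (by omega)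


lemma sInf_reach_eq {T : Set (ℤ × ℤ)} {m z : ℤ}
    (hcross : ∀ w : ℤ, ¬((m, w) ∈ T ∧ (m - 1, w) ∈ T)) :
    sInf (Prod.fst '' {q | Relation.ReflTransGen (Step T) (m, z) q}) = m := by
  have hmem : m ∈ Prod.fst '' {q | Relation.ReflTransGen (Step T) (m, z) q} :=
    ⟨(m, z), .refl, rfl⟩
  have hlb : ∀ r ∈ Prod.fst '' {q | Relation.ReflTransGen (Step T) (m, z) q}, m ≤ r := by
    rintro r ⟨q, hq, rfl⟩
    exact reach_ge hcross le_rfl hq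
  exact le_antisymm (csInf_le ⟨m, hlb⟩ hmem) (le_csInf ⟨m, hmem⟩ hlb)

/-! ### The two maps -/

variable (J J') in
/-- Forward map: from a point of `ℕ² \ J'` to a pair (component, shift). -/
noncomputable def phi
    (hupJ : ∀ γ ∈ J, ∀ δ : ℕ × ℕ, γ.1 ≤ δ.1 → γ.2 ≤ δ.2 → δ ∈ J)
    (hfinJ : Jᶜ.Finite)
    (hupJ' : ∀ γ ∈ J', ∀ δ : ℕ × ℕ, γ.1 ≤ δ.1 → γ.2 ≤ δ.2 → δ ∈ J')
    (hfinJ' : J'ᶜ.Finite)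
    (x : (J'ᶜ : Set (ℕ × ℕ))) :
    {Uα : Set (ℤ × ℤ) × (ℤ × ℤ) //
      0 ≤ Uα.2.2 ∧ IsComponent (TransDiff J J' Uα.2) Uα.1 ∧ Uα.1.Finite} :=
  ⟨({q | Relation.ReflTransGen
        (Step (TransDiff J J'
          (astar J hupJ hfinJ x.1.1 (z0 J' x.1.1) x.1.2 ((z0_spec hfinJ' x.2).2 x.1.2 x.2),
            (x.1.2 : ℤ))))
        ((x.1.1 : ℤ), (z0 J' x.1.1 : ℤ)) q},
    (astar J hupJ hfinJ x.1.1 (z0 J' x.1.1) x.1.2 ((z0_spec hfinJ' x.2).2 x.1.2 x.2),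
      (x.1.2 : ℤ))), by
    obtain ⟨hc0, htop⟩ := z0_spec hfinJ' x.2
    set y := x.1.1
    set b := x.1.2
    set c := z0 J' y
    set a := astar J hupJ hfinJ y c b ((z0_spec hfinJ' x.2).2 b x.2) with ha
    obtain ⟨hQ, hgr⟩ := astar_spec hupJ hfinJ y c b ((z0_spec hfinJ' x.2).2 b x.2)
    have hnQ : ¬ Q J y c b (a + 1) := by
      intro h
      have := hgr (a + 1) h
      omega
    have hbase : ((y : ℤ), (c : ℤ)) ∈ TransDiff J J' (a, (b : ℤ)) := by
      refine ⟨hQ, ?_⟩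
      rintro ⟨-, -, k3⟩
      simp only [Int.toNat_natCast] at k3
      exact hc0 k3
    have hcross := no_cross (J' := J') hupJ htop hnQ
    refine ⟨by positivity, ⟨((y : ℤ), (c : ℤ)), hbase, rfl⟩, ?_⟩
    refine finite_of_props hfinJ' ?_
    intro q hq
    have hqT : q ∈ TransDiff J J' (a, (b : ℤ)) := mem_T_of_reach hbase hq
    have hge : (y : ℤ) ≤ q.1 := reach_ge hcross le_rfl hq
    have h1 : 0 ≤ q.1 - a ∧ 0 ≤ q.2 - (b : ℤ) := ⟨hqT.1.1, hqT.1.2.1⟩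
    refine ⟨by omega, by omega, ?_⟩
    intro hmem
    exact hqT.2 ⟨by omega, by omega, hmem⟩⟩

variable (J J') in
/-- Backward map: a finite component is sent to (its leftmost column, `α_z`). -/
noncomputable def psi
    (hupJ : ∀ γ ∈ J, ∀ δ : ℕ × ℕ, γ.1 ≤ δ.1 → γ.2 ≤ δ.2 → δ ∈ J)
    (hupJ' : ∀ γ ∈ J', ∀ δ : ℕ × ℕ, γ.1 ≤ δ.1 → γ.2 ≤ δ.2 → δ ∈ J')
    (u : {Uα : Set (ℤ × ℤ) × (ℤ × ℤ) //
      0 ≤ Uα.2.2 ∧ IsComponent (TransDiff J J' Uα.2) Uα.1 ∧ Uα.1.Finite}) :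
    (J'ᶜ : Set (ℕ × ℕ)) :=
  ⟨((sInf (Prod.fst '' u.1.1)).toNat, u.1.2.2.toNat), by
    obtain ⟨u, hb0, hcomp, hfin⟩ := u
    show ((sInf (Prod.fst '' u.1)).toNat, u.2.2.toNat) ∉ J'
    obtain ⟨p₀, hp₀, hU⟩ := hcomp
    have hne : (Prod.fst '' u.1).Nonempty := ⟨p₀.1, p₀, by rw [hU]; exact .refl, rfl⟩
    have hfin' : (Prod.fst '' u.1).Finite := hfin.image _
    obtain ⟨q, hqU, hqs⟩ := hne.csInf_mem hfin'
    have hqR : Relation.ReflTransGen (Step (TransDiff J J' u.2)) p₀ q := by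
      rw [hU] at hqU; exact hqU
    have hq1 : 0 ≤ q.1 := fst_nonneg_of_reach hupJ hp₀ (hU ▸ hfin) hqR
    have hqT : q ∈ TransDiff J J' u.2 := mem_T_of_reach hp₀ hqR
    have hq2 : 0 ≤ q.2 - u.2.2 := hqT.1.2.1
    have hqJ' : (q.1.toNat, q.2.toNat) ∉ J' := by
      intro hm
      exact hqT.2 ⟨by omega, by omega, hm⟩
    intro hm
    refine hqJ' (hupJ' _ hm _ ?_ ?_) <;> simp only [← hqs] <;> omega⟩

end BijAux

open BijAux in
/-- Claim 1 in the proof of Lemma 2.7: for staircases `J̃, J̃' ⊆ ℕ²`, there is a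
bijection between `ℕ² \ J̃'` and the set `A_p` of pairs `(U, α)` with `α_z ≥ 0`
and `U` a bounded connected component of `(J̃ + α) \ J̃'` (in `ℤ²`). -/
theorem bijection_Ap (J J' : Set (ℕ × ℕ))
    (hupJ : ∀ γ ∈ J, ∀ δ : ℕ × ℕ, γ.1 ≤ δ.1 → γ.2 ≤ δ.2 → δ ∈ J)
    (hfinJ : Jᶜ.Finite)
    (hupJ' : ∀ γ ∈ J', ∀ δ : ℕ × ℕ, γ.1 ≤ δ.1 → γ.2 ≤ δ.2 → δ ∈ J')
    (hfinJ' : J'ᶜ.Finite) :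
    Nonempty
      ((J'ᶜ : Set (ℕ × ℕ)) ≃
        {Uα : Set (ℤ × ℤ) × (ℤ × ℤ) //
          0 ≤ Uα.2.2 ∧ IsComponent (TransDiff J J' Uα.2) Uα.1 ∧ Uα.1.Finite}) := by
  refine ⟨⟨phi J J' hupJ hfinJ hupJ' hfinJ', psi J J' hupJ hupJ', ?_, ?_⟩⟩
  · -- left inverse
    rintro ⟨⟨y, b⟩, hx⟩
    apply Subtype.ext
    simp only [psi, phi]
    obtain ⟨hc0, htop⟩ := z0_spec (J' := J') hfinJ' hx
    obtain ⟨hQ, hgr⟩ := astar_spec hupJ hfinJ y (z0 J' y) b ((z0_spec hfinJ' hx).2 b hx)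
    have hnQ : ¬ Q J y (z0 J' y) b
        (astar J hupJ hfinJ y (z0 J' y) b ((z0_spec hfinJ' hx).2 b hx) + 1) := by
      intro h
      have := hgr _ h
      omega
    have hcross := no_cross (J' := J') hupJ htop hnQ
    have hsinf := sInf_reach_eq (z := ((z0 J' y : ℕ) : ℤ)) hcross
    rw [hsinf]
    simp
  · -- right inverse
    rintro ⟨⟨U, a, b⟩, hb0, hcomp, hfin⟩
    have hb0' : (0 : ℤ) ≤ b := hb0
    apply Subtype.ext
    simp only [phi, psi]
    obtain ⟨p₀, hp₀, hU⟩ := hcomp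
    dsimp only at hb0 hfin hp₀ hU
    have hne : (Prod.fst '' U).Nonempty := ⟨p₀.1, p₀, by rw [hU]; exact .refl, rfl⟩
    have hfin' : (Prod.fst '' U).Finite := hfin.image _
    obtain ⟨q, hqU, hqs⟩ := hne.csInf_mem hfin'
    have hqR : Relation.ReflTransGen (Step (TransDiff J J' (a, b))) p₀ q := by
      rw [hU] at hqU; exact hqU
    have hq1 : 0 ≤ q.1 := fst_nonneg_of_reach hupJ hp₀ (hU ▸ hfin) hqR
    have hqT : q ∈ TransDiff J J' (a, b) := mem_T_of_reach hp₀ hqR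
    have hq2 : 0 ≤ q.2 - b := hqT.1.2.1
    have hys : ((q.1.toNat : ℕ) : ℤ) = q.1 := Int.toNat_of_nonneg hq1
    have hbs : ((b.toNat : ℕ) : ℤ) = b := Int.toNat_of_nonneg hb0'
    have hqJ' : (q.1.toNat, q.2.toNat) ∉ J' := by
      intro hm
      exact hqT.2 ⟨by omega, by omega, hm⟩
    obtain ⟨hc0, htop⟩ := z0_spec (J' := J') hfinJ' hqJ'
    have hqzc : q.2.toNat ≤ z0 J' q.1.toNat := htop _ hqJ'
    have hclimb := climb (J := J) (J' := J') hupJ hupJ' hqT (c := z0 J' q.1.toNat)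
      (by omega) hc0
    have htopR : Relation.ReflTransGen (Step (TransDiff J J' (a, b))) p₀
        (q.1, (z0 J' q.1.toNat : ℤ)) := hqR.trans hclimb
    have htopT : (q.1, (z0 J' q.1.toNat : ℤ)) ∈ TransDiff J J' (a, b) :=
      mem_T_of_reach hp₀ htopR
    have htop1 : (q.1 - a, (z0 J' q.1.toNat : ℤ) - b) ∈ liftN J := htopT.1
    have hQ : Q J q.1.toNat (z0 J' q.1.toNat) b.toNat a := by
      unfold Q
      rw [hys, hbs]
      exact htop1
    have hnQ : ¬ Q J q.1.toNat (z0 J' q.1.toNat) b.toNat (a + 1) := by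
      intro h
      have h' : (q.1 - (a + 1), (z0 J' q.1.toNat : ℤ) - b) ∈ liftN J := by
        have h2 : ((q.1.toNat : ℤ) - (a + 1), ((z0 J' q.1.toNat : ℕ) : ℤ) - (b.toNat : ℤ)) ∈
            liftN J := h
        rwa [hys, hbs] at h2
      have hrT : ((q.1 - 1, (z0 J' q.1.toNat : ℤ)) : ℤ × ℤ) ∈ TransDiff J J' (a, b) := by
        constructor
        · show (q.1 - 1 - a, (z0 J' q.1.toNat : ℤ) - b) ∈ liftN J
          have he : q.1 - 1 - a = q.1 - (a + 1) := by ring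
          rw [he]
          exact h'
        · rintro ⟨k1, k2, k3⟩
          simp only at k1 k2 k3
          refine hc0 (hupJ' _ k3 _ ?_ ?_) <;> omega
      have hstep : Step (TransDiff J J' (a, b)) (q.1, (z0 J' q.1.toNat : ℤ))
          (q.1 - 1, (z0 J' q.1.toNat : ℤ)) := ⟨htopT, hrT, by simp⟩
      have hrU : ((q.1 - 1, (z0 J' q.1.toNat : ℤ)) : ℤ × ℤ) ∈ U := by
        rw [hU]
        exact htopR.tail hstep
      have hle : sInf (Prod.fst '' U) ≤ q.1 - 1 :=
        csInf_le hfin'.bddBelow ⟨_, hrU, rfl⟩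
      omega
    rw [hqs] at hQ hnQ htopR hys
    have hA : ∀ h : b.toNat ≤ z0 J' (sInf (Prod.fst '' U)).toNat,
        astar J hupJ hfinJ (sInf (Prod.fst '' U)).toNat
          (z0 J' (sInf (Prod.fst '' U)).toNat) b.toNat h = a :=
      fun h => astar_eq hupJ hfinJ h hQ hnQ
    rw [hA, hbs, hys, Prod.mk.injEq]
    refine ⟨?_, rfl⟩
    exact (reach_eq htopR).trans hU.symm
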